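/- Let P be a polytope in ℝ^d with Hausdorff distance to the unit ball at most ε ≤ 1/36. Then every face of P is contained in a ball of radius 2√ε; in particular, every point of the boundary ∂P is at distance at most 2√ε from some vertex of P. -/

import Mathlib

open Metric Set RealInnerProductSpace

section Aux

variable {E : Type*} [NormedAddCommGroup E] [InnerProductSpace ℝ E]

/-- If `x` is in the closed convex hull of `S` and `S` lies in a ball of radius `r`,
then some point of `S` is within `r` of `x`. -/
lemma aux_near (S : Set E) (c x : E) (r : ℝ)
    (hx : x ∈ closure (convexHull ℝ S)) (hS : ∀ s ∈ S, dist s c ≤ r) :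
    ∃ s ∈ S, dist x s ≤ r := by
  have hSne : S.Nonempty := by
    rcases S.eq_empty_or_nonempty with h | h
    · simp [h] at hx
    · exact h
  by_contra hcon
  push_neg at hcon
  obtain ⟨s₀, hs₀⟩ := hSne
  have hr0 : 0 ≤ r := le_trans dist_nonneg (hS s₀ hs₀)
  set w := x - c with hw
  have hhalf : S ⊆ {y | ⟪w, y⟫ ≤ ⟪w, x⟫ - ‖w‖ ^ 2 / 2} := by
    intro s hs
    have h1 : dist s c ≤ r := hS s hs
    have h2 : r < dist x s := hcon s hs
    have h3 : ‖s - c‖ ≤ r := by rwa [← dist_eq_norm]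
    have h4 : r < ‖s - x‖ := by rw [dist_comm, dist_eq_norm] at h2; exact h2
    have hid : ‖s - c‖ ^ 2 = ‖s - x‖ ^ 2 + 2 * ⟪s - x, x - c⟫ + ‖x - c‖ ^ 2 := by
      have := norm_add_sq_real (s - x) (x - c)
      rw [show s - x + (x - c) = s - c by abel] at this
      linarith
    have h5 : ‖s - c‖ ^ 2 ≤ r ^ 2 := by nlinarith [norm_nonneg (s - c)]
    have h6 : r ^ 2 < ‖s - x‖ ^ 2 := by nlinarith
    have h7 : ⟪s - x, x - c⟫ < -(‖w‖ ^ 2) / 2 := by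
      rw [hw]; nlinarith
    have h8 : ⟪s - x, x - c⟫ = ⟪w, s⟫ - ⟪w, x⟫ := by
      rw [real_inner_comm, ← hw, inner_sub_right]
    simp only [Set.mem_setOf_eq]
    linarith
  have hconv : Convex ℝ {y : E | ⟪w, y⟫ ≤ ⟪w, x⟫ - ‖w‖ ^ 2 / 2} :=
    convex_halfSpace_le ⟨fun a b => inner_add_right w a b, fun m a => real_inner_smul_right w a m⟩ _
  have hclosed : IsClosed {y : E | ⟪w, y⟫ ≤ ⟪w, x⟫ - ‖w‖ ^ 2 / 2} :=
    isClosed_le (Continuous.inner continuous_const continuous_id) continuous_const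
  have hxmem : x ∈ {y : E | ⟪w, y⟫ ≤ ⟪w, x⟫ - ‖w‖ ^ 2 / 2} := by
    refine (IsClosed.closure_subset_iff hclosed).2 ?_ hx
    exact (convexHull_min hhalf hconv)
  have hw0 : ‖w‖ ^ 2 ≤ 0 := by
    have h9 := hxmem; simp only [Set.mem_setOf_eq] at h9; linarith
  have hxc : x = c := by
    have : w = 0 := by
      have := norm_nonneg w
      have : ‖w‖ = 0 := by nlinarith
      simpa using this
    rw [hw, sub_eq_zero] at this; exact this
  have : dist x s₀ ≤ r := by rw [hxc, dist_comm]; exact hS s₀ hs₀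
  exact absurd this (not_le.2 (hcon s₀ hs₀))

/-- Points of `P` maximizing a nonzero linear functional lie in a small cap,
hence in a ball of radius `2√ε`. -/
lemma aux_cap {P : Set E} {ε : ℝ} (hε0 : 0 ≤ ε) (hε1 : ε ≤ 1 / 36)
    (hPin : P ⊆ closedBall 0 (1 + ε)) (hPout : closedBall 0 (1 - ε) ⊆ P)
    {w : E} (hw : w ≠ 0) {x : E} (hxP : x ∈ P)
    (hmax : ∀ y ∈ P, ⟪w, y⟫ ≤ ⟪w, x⟫) :
    dist x ((1 - ε) • ‖w‖⁻¹ • w) ≤ 2 * Real.sqrt ε := by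
  set u : E := ‖w‖⁻¹ • w with hu
  have hwn : 0 < ‖w‖ := norm_pos_iff.2 hw
  have hun : ‖u‖ = 1 := norm_smul_inv_norm hw
  have hcP : (1 - ε) • u ∈ P := by
    apply hPout
    simp only [mem_closedBall, dist_zero_right, norm_smul, hun, Real.norm_eq_abs, mul_one]
    rw [abs_of_nonneg (by linarith)]
  have hwu : ⟪w, u⟫ = ‖w‖ := by
    rw [hu, real_inner_smul_right, real_inner_self_eq_norm_sq]
    field_simp
  have hlow : (1 - ε) * ‖w‖ ≤ ⟪w, x⟫ := by
    have := hmax _ hcP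
    rwa [real_inner_smul_right, hwu] at this
  have hxn : ‖x‖ ≤ 1 + ε := by
    have := hPin hxP
    simpa [mem_closedBall, dist_zero_right] using this
  have hix : (1 - ε) * (1 - ε) ≤ ⟪x, (1 - ε) • u⟫ := by
    rw [real_inner_smul_right]
    have h1 : (1 - ε) * ‖w‖ ≤ ⟪x, w⟫ := by rwa [real_inner_comm]
    have h2 : ⟪x, u⟫ = ‖w‖⁻¹ * ⟪x, w⟫ := real_inner_smul_right x w ‖w‖⁻¹
    rw [h2]
    rw [show (1 - ε) * (‖w‖⁻¹ * ⟪x, w⟫) = ‖w‖⁻¹ * ((1 - ε) * ⟪x, w⟫) by ring]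
    have h3 : (1 - ε) * ((1 - ε) * ‖w‖) ≤ (1 - ε) * ⟪x, w⟫ :=
      mul_le_mul_of_nonneg_left h1 (by linarith)
    calc (1 - ε) * (1 - ε) = ‖w‖⁻¹ * ((1 - ε) * ((1 - ε) * ‖w‖)) := by field_simp
      _ ≤ ‖w‖⁻¹ * ((1 - ε) * ⟪x, w⟫) := by
          apply mul_le_mul_of_nonneg_left h3 (by positivity)
  have hcn : ‖(1 - ε) • u‖ = 1 - ε := by
    simp only [norm_smul, hun, Real.norm_eq_abs, mul_one]
    rw [abs_of_nonneg (by linarith)]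
  have hsq : ‖x - (1 - ε) • u‖ ^ 2 ≤ 4 * ε := by
    have := norm_sub_sq_real x ((1 - ε) • u)
    rw [hcn] at this
    nlinarith [norm_nonneg x]
  have h2s : Real.sqrt (‖x - (1 - ε) • u‖ ^ 2) ≤ Real.sqrt (4 * ε) :=
    Real.sqrt_le_sqrt hsq
  rw [Real.sqrt_sq (norm_nonneg _)] at h2s
  rw [dist_eq_norm]
  calc ‖x - (1 - ε) • u‖ ≤ Real.sqrt (4 * ε) := h2s
    _ = 2 * Real.sqrt ε := by
        rw [show (4 : ℝ) * ε = 2 ^ 2 * ε by ring, Real.sqrt_mul (by positivity),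
          Real.sqrt_sq (by norm_num)]

end Aux


/-- **Faces of a nearly spherical polytope are small.**
Let `P = conv(Vt)` be a polytope in `ℝ^d` whose Hausdorff distance to the closed unit ball is at
most `ε ≤ 1/36`.  Then every proper (nonempty exposed) face of `P` is contained in a ball of
radius `2√ε`; in particular, every point of the boundary `∂P` is at distance at most `2√ε`
from some vertex of `P`. -/
theorem faces_small_of_near_ball {d : ℕ}
    (Vt : Finset (EuclideanSpace ℝ (Fin d)))
    (P : Set (EuclideanSpace ℝ (Fin d)))
    (hP : P = convexHull ℝ (Vt : Set (EuclideanSpace ℝ (Fin d))))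
    (ε : ℝ) (hε : ε ≤ 1 / 36)
    (hHD : Metric.hausdorffDist P (Metric.closedBall 0 1) ≤ ε) :
    (∀ F : Set (EuclideanSpace ℝ (Fin d)), IsExposed ℝ P F → F.Nonempty → F ≠ P →
        ∃ c : EuclideanSpace ℝ (Fin d), F ⊆ Metric.closedBall c (2 * Real.sqrt ε)) ∧
      ∀ x ∈ frontier P, ∃ v ∈ Vt, dist x v ≤ 2 * Real.sqrt ε := by
  have hε0 : 0 ≤ ε := le_trans Metric.hausdorffDist_nonneg hHD
  rcases P.eq_empty_or_nonempty with hPe | hne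
  · constructor
    · intro F hF hFne hFP
      exfalso
      obtain ⟨y, hy⟩ := hFne
      have := hF.subset hy
      rw [hPe] at this
      exact this
    · intro x hx
      rw [hPe, frontier_empty] at hx
      exact absurd hx (notMem_empty x)
  -- P is nonempty
  have hPcompact : IsCompact P := by rw [hP]; exact Vt.finite_toSet.isCompact_convexHull ℝ
  have hPclosed : IsClosed P := hPcompact.isClosed
  have hPconv : Convex ℝ P := by rw [hP]; exact convex_convexHull ℝ _
  have hBne : (closedBall (0 : (EuclideanSpace ℝ (Fin d))) 1).Nonempty := ⟨0, mem_closedBall_self zero_le_one⟩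
  have hfin : EMetric.hausdorffEdist P (closedBall (0 : (EuclideanSpace ℝ (Fin d))) 1) ≠ ⊤ :=
    Metric.hausdorffEdist_ne_top_of_nonempty_of_bounded hne hBne hPcompact.isBounded
      isBounded_closedBall
  have hPin : P ⊆ closedBall (0 : (EuclideanSpace ℝ (Fin d))) (1 + ε) := by
    intro z hz
    have h1 : infDist z (closedBall (0 : (EuclideanSpace ℝ (Fin d))) 1) ≤ ε :=
      (Metric.infDist_le_hausdorffDist_of_mem hz hfin).trans hHD
    obtain ⟨y, hy, hdy⟩ := (isCompact_closedBall (0 : (EuclideanSpace ℝ (Fin d))) 1).exists_infDist_eq_dist hBne z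
    rw [mem_closedBall] at hy ⊢
    have h2 : dist z y ≤ ε := by rw [← hdy]; exact h1
    calc dist z 0 ≤ dist z y + dist y 0 := dist_triangle z y 0
      _ ≤ 1 + ε := by linarith
  have hPout : closedBall (0 : (EuclideanSpace ℝ (Fin d))) (1 - ε) ⊆ P := by
    intro z hz
    by_contra hzP
    obtain ⟨f, u, hfu, hux⟩ := geometric_hahn_banach_closed_point hPconv hPclosed hzP
    set w : (EuclideanSpace ℝ (Fin d)) := (InnerProductSpace.toDual ℝ (EuclideanSpace ℝ (Fin d))).symm f with hwdef
    have hfw : ∀ y : (EuclideanSpace ℝ (Fin d)), ⟪w, y⟫ = f y := fun y => InnerProductSpace.toDual_symm_apply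
    obtain ⟨p₀, hp₀⟩ := id hne
    have hw : w ≠ 0 := by
      intro h
      have h1 := hfu p₀ hp₀
      rw [← hfw, h] at h1
      rw [← hfw, h] at hux
      simp only [inner_zero_left] at h1 hux
      linarith
    have hwn : 0 < ‖w‖ := norm_pos_iff.2 hw
    set n : (EuclideanSpace ℝ (Fin d)) := ‖w‖⁻¹ • w with hn
    have hn1 : ‖n‖ = 1 := by
      rw [hn, norm_smul, norm_inv, norm_norm, inv_mul_cancel₀ hwn.ne']
    have hnB : n ∈ closedBall (0 : (EuclideanSpace ℝ (Fin d))) 1 := by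
      rw [mem_closedBall, dist_zero_right, hn1]
    have hfin' : EMetric.hausdorffEdist (closedBall (0 : (EuclideanSpace ℝ (Fin d))) 1) P ≠ ⊤ := by
      simpa only [EMetric.hausdorffEdist, Metric.hausdorffEDist_comm] using hfin
    have h2 : infDist n P ≤ ε := by
      have h2a := Metric.infDist_le_hausdorffDist_of_mem hnB hfin'
      rw [Metric.hausdorffDist_comm] at h2a
      exact h2a.trans hHD
    obtain ⟨p, hpP, hdp⟩ := hPcompact.exists_infDist_eq_dist hne n
    have hA : ⟪w, n⟫ = ‖w‖ := by
      rw [hn, real_inner_smul_right, real_inner_self_eq_norm_sq]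
      field_simp
    have hB : ⟪w, n - p⟫ = ⟪w, n⟫ - ⟪w, p⟫ := inner_sub_right w n p
    have hC : ⟪w, n - p⟫ ≤ ‖w‖ * ‖n - p‖ := real_inner_le_norm w (n - p)
    have hD : ‖n - p‖ ≤ ε := by
      rw [← dist_eq_norm, ← hdp]
      exact h2
    have hE : ⟪w, p⟫ < u := by rw [hfw]; exact hfu p hpP
    have hF : u < ⟪w, z⟫ := by rw [hfw]; exact hux
    have hG : ⟪w, z⟫ ≤ ‖w‖ * ‖z‖ := real_inner_le_norm w z
    have hH : ‖z‖ ≤ 1 - ε := by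
      rw [mem_closedBall, dist_zero_right] at hz
      exact hz
    nlinarith [mul_le_mul_of_nonneg_left hD hwn.le, mul_le_mul_of_nonneg_left hH hwn.le]
  -- Part 1
  have hface : ∀ F : Set (EuclideanSpace ℝ (Fin d)), IsExposed ℝ P F → F.Nonempty → F ≠ P →
      ∃ c : (EuclideanSpace ℝ (Fin d)), F ⊆ closedBall c (2 * Real.sqrt ε) := by
    intro F hF hFne hFP
    obtain ⟨f, hFeq⟩ := hF hFne
    set w : (EuclideanSpace ℝ (Fin d)) := (InnerProductSpace.toDual ℝ (EuclideanSpace ℝ (Fin d))).symm f with hwdef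
    have hfw : ∀ y : (EuclideanSpace ℝ (Fin d)), ⟪w, y⟫ = f y := fun y => InnerProductSpace.toDual_symm_apply
    have hw : w ≠ 0 := by
      intro h
      apply hFP
      rw [hFeq]
      ext y
      simp only [Set.mem_setOf_eq]
      constructor
      · rintro ⟨h1, _⟩; exact h1
      · intro h1
        refine ⟨h1, fun z hz => ?_⟩
        rw [← hfw, ← hfw, h]
        simp
    refine ⟨(1 - ε) • ‖w‖⁻¹ • w, ?_⟩
    intro x hx
    rw [hFeq] at hx
    obtain ⟨hxP, hxmax⟩ := hx
    rw [mem_closedBall]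
    exact aux_cap hε0 hε hPin hPout hw hxP
      (fun y hy => by rw [hfw, hfw]; exact hxmax y hy)
  refine ⟨hface, ?_⟩
  -- Part 2
  intro x hx
  rw [hPclosed.frontier_eq] at hx
  obtain ⟨hxP, hxI⟩ := hx
  have h0 : (0 : (EuclideanSpace ℝ (Fin d))) ∈ interior P := by
    have hball : ball (0 : (EuclideanSpace ℝ (Fin d))) (1 - ε) ⊆ P := (ball_subset_closedBall).trans hPout
    have := interior_maximal hball isOpen_ball
    exact this (mem_ball_self (by linarith))
  obtain ⟨f, hf⟩ := geometric_hahn_banach_open_point hPconv.interior isOpen_interior hxI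
  have hfP : ∀ y ∈ P, f y ≤ f x := by
    intro y hy
    by_contra hcy
    push_neg at hcy
    have key : ∀ t : ℝ, 0 < t → t ≤ 1 → (1 - t) * f y < f x := by
      intro t ht0 ht1
      have hz := hPconv.combo_closure_interior_mem_interior (subset_closure hy) h0
        (by linarith : (0 : ℝ) ≤ 1 - t) ht0 (by ring)
      have := hf _ hz
      simpa [smul_zero, map_smul, smul_eq_mul] using this
    have hx0 : 0 < f x := by
      have := key 1 one_pos le_rfl
      simpa using this
    have hy0 : 0 < f y := lt_trans hx0 hcy
    set t := (f y - f x) / (2 * f y) with htdef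
    have ht0 : 0 < t := div_pos (by linarith) (by linarith)
    have ht1 : t ≤ 1 := by
      rw [htdef, div_le_one (by linarith)]
      linarith
    have hkey := key t ht0 ht1
    have ht : (1 - t) * f y = (f y + f x) / 2 := by
      rw [htdef]; field_simp; ring
    rw [ht] at hkey
    linarith
  set w : (EuclideanSpace ℝ (Fin d)) := (InnerProductSpace.toDual ℝ (EuclideanSpace ℝ (Fin d))).symm f with hwdef
  have hfw : ∀ y : (EuclideanSpace ℝ (Fin d)), ⟪w, y⟫ = f y := fun y => InnerProductSpace.toDual_symm_apply
  have hw : w ≠ 0 := by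
    intro h
    have h1 := hf 0 h0
    rw [← hfw, ← hfw, h] at h1
    simp at h1
  set F : Set (EuclideanSpace ℝ (Fin d)) := P ∩ {y | f x ≤ f y} with hFdef
  have hxF : x ∈ F := ⟨hxP, by simp only [Set.mem_setOf_eq]; exact le_rfl⟩
  have hFcomp : IsCompact F :=
    hPcompact.inter_right (isClosed_le continuous_const f.continuous)
  have hFconv : Convex ℝ F :=
    hPconv.inter (convex_halfSpace_ge ⟨f.map_add, fun c a => f.map_smul c a⟩ (f x))
  have hexp : IsExposed ℝ P F := by
    intro _
    refine ⟨f, ?_⟩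
    ext y
    simp only [hFdef, Set.mem_inter_iff, Set.mem_setOf_eq]
    constructor
    · rintro ⟨h1, h2⟩
      exact ⟨h1, fun z hz => le_trans (hfP z hz) h2⟩
    · rintro ⟨h1, h2⟩
      exact ⟨h1, h2 x hxP⟩
  have hKM : closure (convexHull ℝ (F.extremePoints ℝ)) = F :=
    closure_convexHull_extremePoints hFcomp hFconv
  have hSV : F.extremePoints ℝ ⊆ (Vt : Set (EuclideanSpace ℝ (Fin d))) := by
    intro s hs
    have h1 : s ∈ P.extremePoints ℝ :=
      hexp.isExtreme.extremePoints_subset_extremePoints hs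
    rw [hP] at h1
    exact extremePoints_convexHull_subset h1
  have hScap : ∀ s ∈ F.extremePoints ℝ,
      dist s ((1 - ε) • ‖w‖⁻¹ • w) ≤ 2 * Real.sqrt ε := by
    intro s hs
    obtain ⟨hsP, hsge⟩ := extremePoints_subset hs
    exact aux_cap hε0 hε hPin hPout hw hsP
      (fun y hy => by rw [hfw, hfw]; exact le_trans (hfP y hy) hsge)
  obtain ⟨s, hsS, hds⟩ := aux_near (F.extremePoints ℝ) ((1 - ε) • ‖w‖⁻¹ • w) x
    (2 * Real.sqrt ε) (hKM.symm ▸ hxF) hScap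
  exact ⟨s, hSV hsS, hds⟩
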